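/- For a finite simplicial complex X on vertex set V and an integer d ≥ 0, the following are equivalent: (i) H̃_i(X[S]; K) = 0 for every S ⊆ V and every i ≥ d (i.e., X is d-Leray over K); (ii) H̃_i(lk(X,σ); K) = 0 for every face σ ∈ X and every i ≥ d. -/

import Mathlib

open Finset

/-- A finite abstract simplicial complex on the vertex type `V` (possibly void;
any non-void complex contains the empty face `∅` by downward closure). -/
structure SComplex (V : Type) [DecidableEq V] where
  faces : Finset (Finset V)
  down_closed : ∀ ⦃σ : Finset V⦄, σ ∈ faces → ∀ ⦃τ : Finset V⦄, τ ⊆ σ → τ ∈ faces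

namespace SComplex

variable {V : Type} [DecidableEq V]

/-- Intersection of two simplicial complexes on the same vertex set. -/
def inter (X Y : SComplex V) : SComplex V where
  faces := X.faces ∩ Y.faces
  down_closed := fun σ hσ τ hτ => by
    rw [Finset.mem_inter] at hσ ⊢
    exact ⟨X.down_closed hσ.1 hτ, Y.down_closed hσ.2 hτ⟩

/-- Union of two simplicial complexes on the same vertex set. -/
def union (X Y : SComplex V) : SComplex V where
  faces := X.faces ∪ Y.faces
  down_closed := fun σ hσ τ hτ => by
    rw [Finset.mem_union] at hσ ⊢
    exact hσ.elim (fun h => Or.inl (X.down_closed h hτ)) (fun h => Or.inr (Y.down_closed h hτ))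

/-- The induced subcomplex `X[S] = {σ ∈ X : σ ⊆ S}`. -/
def induced (X : SComplex V) (S : Finset V) : SComplex V where
  faces := X.faces.filter (fun σ => σ ⊆ S)
  down_closed := fun σ hσ τ hτ => by
    rw [Finset.mem_filter] at hσ ⊢
    exact ⟨X.down_closed hσ.1 hτ, hτ.trans hσ.2⟩

/-- The link `lk(X,A) = {τ ∈ X : τ ∩ A = ∅, τ ∪ A ∈ X}`; it is the void
complex when `A ∉ X`. -/
def link (X : SComplex V) (A : Finset V) : SComplex V where
  faces := X.faces.filter (fun τ => τ ∩ A = ∅ ∧ τ ∪ A ∈ X.faces)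
  down_closed := fun σ hσ τ hτ => by
    rw [Finset.mem_filter] at hσ ⊢
    refine ⟨X.down_closed hσ.1 hτ, Finset.subset_empty.1 ?_,
      X.down_closed hσ.2.2 (Finset.union_subset_union hτ (Finset.Subset.refl A))⟩
    rw [← hσ.2.1]
    exact Finset.inter_subset_inter hτ (Finset.Subset.refl A)

/-- The full simplex `Δ(A)` on a vertex set `A`. -/
def simplexOn (A : Finset V) : SComplex V where
  faces := A.powerset
  down_closed := fun σ hσ τ hτ =>
    Finset.mem_powerset.2 (hτ.trans (Finset.mem_powerset.1 hσ))

/-- The boundary `∂Δ(A)` of the simplex on `A` (all proper subsets of `A`). -/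
def bdSimplex (A : Finset V) : SComplex V where
  faces := A.powerset.erase A
  down_closed := fun σ hσ τ hτ => by
    rw [Finset.mem_erase, Finset.mem_powerset] at hσ ⊢
    refine ⟨fun hτA => hσ.1 ?_, hτ.trans hσ.2⟩
    subst hτA
    exact Finset.Subset.antisymm hσ.2 hτ

variable [Fintype V]

/-- Intersection of a finite family of complexes on the same vertex set. -/
def interFam {r : ℕ} (X : Fin r → SComplex V) : SComplex V where
  faces := Finset.univ.filter (fun σ => ∀ i, σ ∈ (X i).faces)
  down_closed := fun σ hσ τ hτ => by
    rw [Finset.mem_filter] at hσ ⊢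
    exact ⟨Finset.mem_univ τ, fun i => (X i).down_closed (hσ.2 i) hτ⟩

/-- Union of a finite family of complexes on the same vertex set. -/
def unionFam {r : ℕ} (X : Fin r → SComplex V) : SComplex V where
  faces := Finset.univ.filter (fun σ => ∃ i, σ ∈ (X i).faces)
  down_closed := fun σ hσ τ hτ => by
    rw [Finset.mem_filter] at hσ ⊢
    obtain ⟨-, i, hi⟩ := hσ
    exact ⟨Finset.mem_univ τ, i, (X i).down_closed hi hτ⟩

/-- The join of a family of complexes `Z i`, the `i`-th one having its vertices
inside the block `Vs i` of a partition of the vertex set: the faces are the sets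
whose trace on each block is a face of the corresponding complex. -/
def joinFam {r : ℕ} (Vs : Fin r → Finset V) (Z : Fin r → SComplex V) : SComplex V where
  faces := Finset.univ.filter (fun σ => ∀ i, σ ∩ Vs i ∈ (Z i).faces)
  down_closed := fun σ hσ τ hτ => by
    rw [Finset.mem_filter] at hσ ⊢
    exact ⟨Finset.mem_univ τ, fun i =>
      (Z i).down_closed (hσ.2 i) (Finset.inter_subset_inter hτ (Finset.Subset.refl _))⟩

/-- The Alexander dual `X* = {τ : [n] - τ ∉ X}`. -/
def dual (X : SComplex V) : SComplex V where
  faces := Finset.univ.filter (fun τ => τᶜ ∉ X.faces)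
  down_closed := fun σ hσ τ hτ => by
    rw [Finset.mem_filter] at hσ ⊢
    exact ⟨Finset.mem_univ τ, fun hc => hσ.2 (X.down_closed hc (Finset.compl_subset_compl.2 hτ))⟩

/-- The set of faces of `X` of cardinality `k` (i.e. of dimension `k - 1`). -/
def cells (X : SComplex V) (k : ℕ) : Finset (Finset V) :=
  X.faces.filter (fun σ => σ.card = k)

/-- The space of simplicial `(k-1)`-dimensional chains of `X` with coefficients
in `K`: chains are indexed by cardinality, so degree `k` chains are spanned by
the faces of cardinality `k`.  (In particular degree `0` chains are spanned by
the empty face, giving the augmented chain complex computing reduced homology.) -/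
abbrev Chains (K : Type) [Field K] (X : SComplex V) (k : ℕ) : Type := ↥(X.cells k) → K

/-- The simplicial boundary map from degree `k+1` chains (on faces of
cardinality `k+1`) to degree `k` chains.  Signs are computed with respect to a
fixed enumeration of the vertices. -/
noncomputable def boundary (K : Type) [Field K] (X : SComplex V) (k : ℕ) :
    Chains K X (k+1) →ₗ[K] Chains K X k :=
  LinearMap.pi fun τ =>
    ∑ σ : ↥(X.cells (k+1)),
      (∑ v ∈ (σ : Finset V),
        if (σ : Finset V).erase v = (τ : Finset V) then
          ((-1 : K) ^ (((σ : Finset V)).filter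
            (fun w => Fintype.equivFin V w < Fintype.equivFin V v)).card)
        else 0) • LinearMap.proj σ

/-- Cycles of the (augmented) simplicial chain complex in degree `k`
(corresponding to homological dimension `k - 1`). -/
noncomputable def cyclesSub (K : Type) [Field K] (X : SComplex V) :
    (k : ℕ) → Submodule K (Chains K X k)
  | 0 => ⊤
  | (m+1) => LinearMap.ker (boundary K X m)

/-- The reduced simplicial homology `H̃_{k-1}(X; K)` (cardinality-indexed: the
argument `k` corresponds to homological dimension `k - 1`). -/
noncomputable abbrev RedHomology (K : Type) [Field K] (X : SComplex V) (k : ℕ) : Type :=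
  ↥(cyclesSub K X k) ⧸ Submodule.comap (cyclesSub K X k).subtype
      (LinearMap.range (boundary K X k))

/-- `h̃_{k-1}(X) = dim_K H̃_{k-1}(X; K)` (cardinality-indexed, as in
`RedHomology`). -/
noncomputable def redHomDim (K : Type) [Field K] (X : SComplex V) (k : ℕ) : ℕ :=
  Module.finrank K (RedHomology K X k)

/-- `dim_K H̃_k(X; K)` for an arbitrary integer `k`; it is zero for `k ≤ -2`.
Here the argument is the genuine homological dimension `k`. -/
noncomputable def redHomDimZ (K : Type) [Field K] (X : SComplex V) (k : ℤ) : ℕ :=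
  if 0 ≤ k + 1 then redHomDim K X (k + 1).toNat else 0

/-- Chains supported on the faces of a subcomplex `A`, inside the chains of `X`. -/
noncomputable def subChains (K : Type) [Field K] (X A : SComplex V) (k : ℕ) :
    Submodule K (Chains K X k) :=
  ⨅ (σ : ↥(X.cells k)) (_ : (σ : Finset V) ∉ A.faces), LinearMap.ker (LinearMap.proj σ)

/-- Relative cycles in homological dimension `i` for the pair `(X, A)`. -/
noncomputable def relCycles (K : Type) [Field K] (X A : SComplex V) (i : ℕ) :
    Submodule K (Chains K X (i+1)) :=
  Submodule.comap (boundary K X i) (subChains K X A i)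

/-- The relative simplicial homology `H_i(X, A; K)` of the pair `(X, A)`. -/
noncomputable abbrev RelHomology (K : Type) [Field K] (X A : SComplex V) (i : ℕ) : Type :=
  ↥(relCycles K X A i) ⧸ Submodule.comap (relCycles K X A i).subtype
      (subChains K X A (i+1) ⊔ LinearMap.range (boundary K X (i+1)))

/-- `dim_K H_i(X, A; K)`. -/
noncomputable def relHomDim (K : Type) [Field K] (X A : SComplex V) (i : ℕ) : ℕ :=
  Module.finrank K (RelHomology K X A i)

/-- `X` is `d`-Leray over `K`: every induced subcomplex has vanishing reduced
homology in dimensions `≥ d`. -/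
def IsLeray (K : Type) [Field K] (d : ℕ) (X : SComplex V) : Prop :=
  ∀ S : Finset V, ∀ i : ℕ, d ≤ i → redHomDim K (X.induced S) (i + 1) = 0

/-- The Leray number `L_K(X)`: the minimal `d` such that `X` is `d`-Leray over `K`. -/
noncomputable def lerayNum (K : Type) [Field K] (X : SComplex V) : ℕ :=
  sInf {d | IsLeray K d X}

end SComplex


set_option linter.unusedSectionVars false

namespace LerayAux

variable {V : Type} [DecidableEq V] [Fintype V] (K : Type) [Field K]

/-- The sign of vertex `v` in face `σ`. -/
noncomputable def sgn (σ : Finset V) (v : V) : K :=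
  (-1 : K) ^ ((σ.filter (fun w => Fintype.equivFin V w < Fintype.equivFin V v)).card)

lemma sgn_mul_self (σ : Finset V) (v : V) : sgn K σ v * sgn K σ v = 1 := by
  rw [sgn, ← pow_add, ← two_mul, pow_mul]
  norm_num

/-- Global boundary operator on functions `Finset V → K`. -/
noncomputable def Dg : (Finset V → K) →ₗ[K] (Finset V → K) where
  toFun c := fun τ => ∑ σ : Finset V,
    (∑ v ∈ σ, if σ.erase v = τ then sgn K σ v else 0) * c σ
  map_add' a b := by
    funext τ
    simp [mul_add, Finset.sum_add_distrib]
  map_smul' r a := by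
    funext τ
    simp only [Pi.smul_apply, smul_eq_mul, RingHom.id_apply, Finset.mul_sum]
    exact Finset.sum_congr rfl fun σ _ => by ring

lemma Dg_apply (z : Finset V → K) (τ : Finset V) :
    Dg K z τ = ∑ u : V, if u ∉ τ then sgn K (insert u τ) u * z (insert u τ) else 0 := by
  show (∑ σ : Finset V, (∑ v ∈ σ, if σ.erase v = τ then sgn K σ v else 0) * z σ) = _
  have : ∀ σ : Finset V, (∑ v ∈ σ, if σ.erase v = τ then sgn K σ v else 0) * z σ
      = ∑ u : V, if u ∈ σ ∧ σ.erase u = τ then sgn K σ u * z σ else 0 := by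
    intro σ
    rw [Finset.sum_mul, ← Finset.sum_filter_add_sum_filter_not Finset.univ (· ∈ σ)]
    have h1 : ∑ u ∈ Finset.univ.filter (· ∈ σ), (if u ∈ σ ∧ σ.erase u = τ then sgn K σ u * z σ else 0)
        = ∑ u ∈ σ, (if σ.erase u = τ then sgn K σ u else 0) * z σ := by
      rw [Finset.filter_mem_eq_inter, Finset.univ_inter]
      exact Finset.sum_congr rfl fun u hu => by
        simp only [hu, true_and, ite_mul, zero_mul]
    have h2 : ∑ u ∈ Finset.univ.filter (¬ · ∈ σ), (if u ∈ σ ∧ σ.erase u = τ then sgn K σ u * z σ else 0) = 0 :=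
      Finset.sum_eq_zero fun u hu => by
        rw [Finset.mem_filter] at hu
        simp [hu.2]
    rw [h1, h2, add_zero]
  rw [Finset.sum_congr rfl fun σ _ => this σ, Finset.sum_comm]
  refine Finset.sum_congr rfl fun u _ => ?_
  by_cases hu : u ∉ τ
  · rw [if_pos hu]
    rw [Finset.sum_eq_single (insert u τ)]
    · have h1 : u ∈ insert u τ := Finset.mem_insert_self u τ
      rw [if_pos ⟨h1, Finset.erase_insert hu⟩]
    · intro σ _ hne
      rw [if_neg]
      rintro ⟨h1, h2⟩
      exact hne (by rw [← h2, Finset.insert_erase h1])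
    · intro h; exact absurd (Finset.mem_univ _) h
  · rw [if_neg hu]
    push_neg at hu
    refine Finset.sum_eq_zero fun σ _ => ?_
    rw [if_neg]
    rintro ⟨h1, h2⟩
    exact (Finset.notMem_erase u σ) (h2 ▸ hu)

lemma sgn_antisymm_aux {σ : Finset V} {u v : V} (hu : u ∈ σ) (hv : v ∈ σ)
    (hlt : Fintype.equivFin V u < Fintype.equivFin V v) :
    sgn K σ u * sgn K (σ.erase u) v = -(sgn K σ v * sgn K (σ.erase v) u) := by
  have e1 : sgn K (σ.erase v) u = sgn K σ u := by
    unfold sgn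
    rw [Finset.filter_erase, Finset.erase_eq_of_notMem]
    simp only [Finset.mem_filter, not_and]
    intro _
    exact not_lt.2 hlt.le
  have hmem : u ∈ σ.filter (fun w => Fintype.equivFin V w < Fintype.equivFin V v) :=
    Finset.mem_filter.2 ⟨hu, hlt⟩
  have hpos : 0 < (σ.filter (fun w => Fintype.equivFin V w < Fintype.equivFin V v)).card :=
    Finset.card_pos.2 ⟨u, hmem⟩
  have e2 : sgn K (σ.erase u) v = -sgn K σ v := by
    unfold sgn
    rw [Finset.filter_erase, Finset.card_erase_of_mem hmem]
    conv_rhs => rw [← Nat.succ_pred_eq_of_pos hpos]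
    rw [pow_succ, Nat.pred_eq_sub_one]
    ring
  rw [e1, e2]
  ring

lemma sgn_antisymm {σ : Finset V} {u v : V} (hu : u ∈ σ) (hv : v ∈ σ) (hne : u ≠ v) :
    sgn K σ u * sgn K (σ.erase u) v = -(sgn K σ v * sgn K (σ.erase v) u) := by
  rcases lt_trichotomy (Fintype.equivFin V u) (Fintype.equivFin V v) with h | h | h
  · exact sgn_antisymm_aux K hu hv h
  · exact absurd ((Fintype.equivFin V).injective h) hne
  · rw [sgn_antisymm_aux K hv hu h]; ring

lemma sum_pair_cancel (G : V → V → K) (h : ∀ u w, G u w + G w u = 0)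
    (hdiag : ∀ u, G u u = 0) : (∑ u : V, ∑ w : V, G u w) = 0 := by
  have e : (∑ p : V × V, G p.1 p.2) = ∑ u : V, ∑ w : V, G u w := Fintype.sum_prod_type _
  rw [← e]
  refine Finset.sum_ninvolution (fun p => (p.2, p.1)) (fun p => h p.1 p.2) ?_
    (fun _ => Finset.mem_univ _) (fun p => rfl)
  rintro ⟨u, w⟩ hne heq
  have hww : w = u := congrArg Prod.fst heq
  subst hww
  exact hne (hdiag w)

lemma Dg_Dg (z : Finset V → K) : Dg K (Dg K z) = 0 := by
  funext τ
  rw [Dg_apply]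
  show _ = (0 : K)
  have key : ∀ u : V, (if u ∉ τ then sgn K (insert u τ) u * Dg K z (insert u τ) else 0)
      = ∑ w : V, (if u ∉ τ ∧ w ∉ insert u τ then
          sgn K (insert u τ) u * (sgn K (insert w (insert u τ)) w *
            z (insert w (insert u τ))) else 0) := by
    intro u
    by_cases hu : u ∉ τ
    · rw [if_pos hu, Dg_apply, Finset.mul_sum]
      refine Finset.sum_congr rfl fun w _ => ?_
      by_cases hw : w ∉ insert u τ
      · rw [if_pos hw, if_pos ⟨hu, hw⟩]
      · rw [if_neg hw, if_neg (by tauto), mul_zero]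
    · rw [if_neg hu]
      exact (Finset.sum_eq_zero fun w _ => by rw [if_neg (by tauto)]).symm
  rw [Finset.sum_congr rfl fun u _ => key u]
  refine sum_pair_cancel K _ ?_ ?_
  · intro u w
    by_cases hc : u ∉ τ ∧ w ∉ insert u τ
    · obtain ⟨hu, hw⟩ := hc
      have hwτ : w ∉ τ := fun h => hw (Finset.mem_insert_of_mem h)
      have hne : u ≠ w := fun h => hw (h ▸ Finset.mem_insert_self u τ)
      have huw : u ∉ insert w τ := by
        simp only [Finset.mem_insert, not_or]; exact ⟨hne, hu⟩
      rw [if_pos ⟨hu, hw⟩, if_pos ⟨hwτ, huw⟩]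
      have hcomm : insert u (insert w τ) = insert w (insert u τ) := Finset.insert_comm u w τ
      set σ := insert w (insert u τ) with hσ
      have h1 : insert u τ = σ.erase w := (Finset.erase_insert hw).symm
      have h2 : insert w τ = σ.erase u := by
        rw [← hcomm, Finset.erase_insert huw]
      have huσ : u ∈ σ := by rw [← hcomm]; exact Finset.mem_insert_self u _
      have hwσ : w ∈ σ := Finset.mem_insert_self w _
      rw [hcomm, h1, h2]
      have has := sgn_antisymm K huσ hwσ hne
      calc sgn K (σ.erase w) u * (sgn K σ w * z σ) + sgn K (σ.erase u) w * (sgn K σ u * z σ)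
          = (sgn K σ w * sgn K (σ.erase w) u + sgn K σ u * sgn K (σ.erase u) w) * z σ := by ring
        _ = 0 := by linear_combination z σ * has
    · have hc2 : ¬ (w ∉ τ ∧ u ∉ insert w τ) := by
        rintro ⟨h1, h2⟩
        simp only [Finset.mem_insert, not_or] at h2
        exact hc ⟨h2.2, by simp only [Finset.mem_insert, not_or]
                           exact ⟨fun h => h2.1 h.symm, h1⟩⟩
      rw [if_neg hc, if_neg hc2, add_zero]
  · intro u
    rw [if_neg]
    rintro ⟨_, h2⟩
    exact h2 (Finset.mem_insert_self u τ)


noncomputable def ConeF (v : V) (z : Finset V → K) : Finset V → K :=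
  fun σ => if v ∈ σ then sgn K σ v * z (σ.erase v) else 0

lemma homotopy (v : V) (z : Finset V → K) (τ : Finset V) :
    Dg K (ConeF K v z) τ + ConeF K v (Dg K z) τ = z τ := by
  by_cases hv : v ∈ τ
  · rw [Dg_apply]
    have hC : ConeF K v (Dg K z) τ
        = ∑ u : V, sgn K τ v * (if u ∉ τ.erase v then
            sgn K (insert u (τ.erase v)) u * z (insert u (τ.erase v)) else 0) := by
      rw [ConeF, if_pos hv, Dg_apply, Finset.mul_sum]
    rw [hC, ← Finset.sum_add_distrib]
    rw [Finset.sum_eq_single v]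
    · rw [if_neg (not_not_intro hv), zero_add, if_pos (Finset.notMem_erase v τ),
        Finset.insert_erase hv, ← mul_assoc, sgn_mul_self, one_mul]
    · intro u _ hne
      by_cases hu : u ∈ τ
      · rw [if_neg (not_not_intro hu), if_neg (not_not_intro (Finset.mem_erase.2 ⟨hne, hu⟩)),
          mul_zero, add_zero]
      · rw [if_pos hu, if_pos (fun h => hu (Finset.mem_of_mem_erase h))]
        have hvu : v ∈ insert u τ := Finset.mem_insert_of_mem hv
        have huv : u ≠ v := fun h => hu (h ▸ hv)
        rw [ConeF, if_pos hvu, Finset.erase_insert_of_ne huv]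
        set σ := insert u τ with hσ
        have hτ : τ = σ.erase u := (Finset.erase_insert hu).symm
        have hρ : insert u (τ.erase v) = σ.erase v := by
          rw [hσ, Finset.erase_insert_of_ne huv]
        rw [hρ]
        conv_lhs => rw [hτ]
        have huσ : u ∈ σ := Finset.mem_insert_self u τ
        have hvσ : v ∈ σ := hvu
        have has := sgn_antisymm K huσ hvσ huv
        have hB := sgn_mul_self K (σ.erase u) v
        have hCq := sgn_mul_self K σ v
        linear_combination (sgn K (σ.erase u) v * sgn K σ v * z (σ.erase v)) * has
          - (sgn K σ u * sgn K σ v * z (σ.erase v)) * hB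
          - (sgn K (σ.erase u) v * sgn K (σ.erase v) u * z (σ.erase v)) * hCq
    · intro h; exact absurd (Finset.mem_univ v) h
  · have hC : ConeF K v (Dg K z) τ = 0 := if_neg hv
    rw [hC, add_zero, Dg_apply, Finset.sum_eq_single v]
    · rw [if_pos hv, ConeF, if_pos (Finset.mem_insert_self v τ), Finset.erase_insert hv,
        ← mul_assoc, sgn_mul_self, one_mul]
    · intro u _ hne
      by_cases hu : u ∈ τ
      · exact if_neg (not_not_intro hu)
      · rw [if_pos hu, ConeF, if_neg (by
          simp only [Finset.mem_insert, not_or]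
          exact ⟨fun h => hne h.symm, hv⟩), mul_zero]
    · intro h; exact absurd (Finset.mem_univ v) h

lemma union_singleton' (s : Finset V) (a : V) : s ∪ {a} = insert a s := by
  ext x; simp [or_comm]

/-- The closed star of `v` in `Y`. -/
def starC (Y : SComplex V) (v : V) : SComplex V where
  faces := Y.faces.filter (fun τ => insert v τ ∈ Y.faces)
  down_closed := fun σ hσ τ hτ => by
    rw [Finset.mem_filter] at hσ ⊢
    exact ⟨Y.down_closed hσ.1 hτ, Y.down_closed hσ.2 (Finset.insert_subset_insert v hτ)⟩

variable {K}

/-- `z` is supported on the faces of `A`. -/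
def SuppIn (A : SComplex V) (z : Finset V → K) : Prop := ∀ σ, σ ∉ A.faces → z σ = 0

/-- `z` is supported on sets of cardinality `k`. -/
def Homog (k : ℕ) (z : Finset V → K) : Prop := ∀ σ : Finset V, σ.card ≠ k → z σ = 0

lemma SuppIn.mono {A B : SComplex V} (h : A.faces ⊆ B.faces) {z : Finset V → K}
    (hz : SuppIn A z) : SuppIn B z := fun σ hσ => hz σ (fun hh => hσ (h hh))

lemma suppIn_zero (A : SComplex V) : SuppIn A (0 : Finset V → K) := fun _ _ => rfl

lemma homog_zero (k : ℕ) : Homog k (0 : Finset V → K) := fun _ _ => rfl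

lemma SuppIn.sub {A : SComplex V} {a b : Finset V → K} (ha : SuppIn A a) (hb : SuppIn A b) :
    SuppIn A (a - b) := fun σ hσ => by
  simp [ha σ hσ, hb σ hσ]

lemma SuppIn.add {A : SComplex V} {a b : Finset V → K} (ha : SuppIn A a) (hb : SuppIn A b) :
    SuppIn A (a + b) := fun σ hσ => by
  simp [ha σ hσ, hb σ hσ]

lemma Homog.sub {k : ℕ} {a b : Finset V → K} (ha : Homog k a) (hb : Homog k b) :
    Homog k (a - b) := fun σ hσ => by
  simp [ha σ hσ, hb σ hσ]

lemma Homog.add {k : ℕ} {a b : Finset V → K} (ha : Homog k a) (hb : Homog k b) :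
    Homog k (a + b) := fun σ hσ => by
  simp [ha σ hσ, hb σ hσ]

lemma SuppIn.dg {A : SComplex V} {z : Finset V → K} (hz : SuppIn A z) :
    SuppIn A (Dg K z) := by
  intro τ hτ
  rw [Dg_apply]
  refine Finset.sum_eq_zero fun u _ => ?_
  by_cases hu : u ∉ τ
  · rw [if_pos hu, hz (insert u τ) (fun h => hτ (A.down_closed h (Finset.subset_insert u τ))),
      mul_zero]
  · exact if_neg hu

lemma Homog.dg {k : ℕ} {z : Finset V → K} (hz : Homog (k+1) z) :
    Homog k (Dg K z) := by
  intro τ hτ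
  rw [Dg_apply]
  refine Finset.sum_eq_zero fun u _ => ?_
  by_cases hu : u ∉ τ
  · rw [if_pos hu, hz (insert u τ) (by rw [Finset.card_insert_of_notMem hu]; omega), mul_zero]
  · exact if_neg hu

lemma coneF_suppIn {Y : SComplex V} {v : V} {z : Finset V → K}
    (hz : SuppIn (Y.link {v}) z) : SuppIn (starC Y v) (ConeF K v z) := by
  intro σ hσ
  rw [ConeF]
  by_cases hv : v ∈ σ
  · rw [if_pos hv]
    rw [hz (σ.erase v), mul_zero]
    intro hmem
    apply hσ
    rw [SComplex.link, Finset.mem_filter] at hmem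
    rw [starC, Finset.mem_filter]
    have h2 : (σ.erase v) ∪ {v} = σ := by rw [union_singleton', Finset.insert_erase hv]
    have hσY : σ ∈ Y.faces := h2 ▸ hmem.2.2
    exact ⟨hσY, by rwa [Finset.insert_eq_self.2 hv]⟩
  · exact if_neg hv

lemma coneF_homog {v : V} {k : ℕ} {z : Finset V → K} (hz : Homog k z) :
    Homog (k+1) (ConeF K v z) := by
  intro σ hσ
  rw [ConeF]
  by_cases hv : v ∈ σ
  · rw [if_pos hv, hz (σ.erase v) (by
      rw [Finset.card_erase_of_mem hv]
      have h1 : 0 < σ.card := Finset.card_pos.2 ⟨v, hv⟩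
      omega), mul_zero]
  · exact if_neg hv

lemma coneF_dg {v : V} {z : Finset V → K} (hz : Dg K z = 0) :
    Dg K (ConeF K v z) = z := by
  funext τ
  have := homotopy K v z τ
  rwa [hz, ConeF, show ((0 : Finset V → K) (τ.erase v)) = 0 from rfl, mul_zero, ite_self,
    add_zero] at this

variable (K)

/-- Extension by zero of a chain of `X` to a global function. -/
noncomputable def extC (X : SComplex V) (k : ℕ) (c : SComplex.Chains K X k) :
    Finset V → K :=
  fun σ => if h : σ ∈ X.cells k then c ⟨σ, h⟩ else 0

lemma extC_suppIn (X : SComplex V) (k : ℕ) (c : SComplex.Chains K X k) :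
    SuppIn X (extC K X k c) := by
  intro σ hσ
  rw [extC, dif_neg]
  intro h
  exact hσ (Finset.mem_filter.1 h).1

lemma extC_homog (X : SComplex V) (k : ℕ) (c : SComplex.Chains K X k) :
    Homog k (extC K X k c) := by
  intro σ hσ
  rw [extC, dif_neg]
  intro h
  exact hσ (Finset.mem_filter.1 h).2

lemma extC_coe (X : SComplex V) (k : ℕ) (c : SComplex.Chains K X k) (σ : ↥(X.cells k)) :
    extC K X k c ↑σ = c σ := by
  rw [extC, dif_pos σ.2]

lemma extC_inj {X : SComplex V} {k : ℕ} {c c' : SComplex.Chains K X k}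
    (h : extC K X k c = extC K X k c') : c = c' := by
  funext σ
  have := congrFun h ↑σ
  rwa [extC_coe, extC_coe] at this

lemma extC_zero (X : SComplex V) (k : ℕ) : extC K X k 0 = 0 := by
  funext σ
  rw [extC]
  split <;> rfl

lemma mem_cells {X : SComplex V} {k : ℕ} {σ : Finset V} :
    σ ∈ X.cells k ↔ σ ∈ X.faces ∧ σ.card = k := Finset.mem_filter

lemma boundary_apply (X : SComplex V) (k : ℕ) (c : SComplex.Chains K X (k+1))
    (τ : ↥(X.cells k)) :
    SComplex.boundary K X k c τ = ∑ σ : ↥(X.cells (k+1)),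
      (∑ v ∈ (σ : Finset V), if (σ : Finset V).erase v = (τ : Finset V)
        then sgn K (σ : Finset V) v else 0) * c σ := by
  simp only [SComplex.boundary, LinearMap.pi_apply, LinearMap.coe_sum, Finset.sum_apply,
    LinearMap.smul_apply, LinearMap.proj_apply, smul_eq_mul, sgn]

lemma ext_boundary (X : SComplex V) (k : ℕ) (c : SComplex.Chains K X (k+1)) :
    extC K X k (SComplex.boundary K X k c) = Dg K (extC K X (k+1) c) := by
  funext τ
  have hR : Dg K (extC K X (k+1) c) τ = ∑ σ ∈ X.cells (k+1),
      (∑ v ∈ σ, if σ.erase v = τ then sgn K σ v else 0) * extC K X (k+1) c σ := by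
    show (∑ σ : Finset V, _) = _
    rw [← Finset.sum_subset (Finset.subset_univ (X.cells (k+1)))]
    intro σ _ hσ
    rw [extC, dif_neg hσ, mul_zero]
  rw [hR, ← Finset.sum_attach (X.cells (k+1))
    (fun σ => (∑ v ∈ σ, if σ.erase v = τ then sgn K σ v else 0) * extC K X (k+1) c σ)]
  by_cases hτ : τ ∈ X.cells k
  · rw [extC, dif_pos hτ, boundary_apply]
    refine Finset.sum_congr rfl fun σ _ => ?_
    rw [extC_coe]
  · rw [extC, dif_neg hτ]
    refine (Finset.sum_eq_zero fun σ _ => ?_).symm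
    have hz : (∑ v ∈ (σ : Finset V), if (σ : Finset V).erase v = τ then sgn K ↑σ v else 0) = 0 := by
      refine Finset.sum_eq_zero fun v hv => ?_
      rw [if_neg]
      intro he
      apply hτ
      have hσf := (mem_cells.1 σ.2).1
      have hσc := (mem_cells.1 σ.2).2
      refine mem_cells.2 ⟨X.down_closed hσf (he ▸ Finset.erase_subset v ↑σ), ?_⟩
      rw [← he, Finset.card_erase_of_mem hv, hσc]
      omega
    rw [hz, zero_mul]

/-- Restriction of a global function to a chain of `X`. -/
noncomputable def resC (X : SComplex V) (k : ℕ) (z : Finset V → K) :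
    SComplex.Chains K X k := fun σ => z ↑σ

lemma ext_res {X : SComplex V} {k : ℕ} {z : Finset V → K} (hs : SuppIn X z)
    (hh : Homog k z) : extC K X k (resC K X k z) = z := by
  funext σ
  rw [extC]
  by_cases h : σ ∈ X.cells k
  · rw [dif_pos h]; rfl
  · rw [dif_neg h]
    rw [mem_cells] at h
    by_cases hf : σ ∈ X.faces
    · exact (hh σ (fun hc => h ⟨hf, hc⟩)).symm
    · exact (hs σ hf).symm

/-- Vanishing of `H̃_i(A;K)` expressed in the global chain model. -/
def GVP (A : SComplex V) (i : ℕ) : Prop :=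
  ∀ z : Finset V → K, SuppIn A z → Homog (i+1) z → Dg K z = 0 →
    ∃ w, SuppIn A w ∧ Homog (i+2) w ∧ Dg K w = z

lemma redHom_iff (X : SComplex V) (i : ℕ) :
    SComplex.redHomDim K X (i+1) = 0 ↔ GVP K X i := by
  have h0 : SComplex.redHomDim K X (i+1) = 0 ↔
      LinearMap.ker (SComplex.boundary K X i) ≤
        LinearMap.range (SComplex.boundary K X (i+1)) := by
    rw [SComplex.redHomDim, Module.finrank_zero_iff,
      Submodule.Quotient.subsingleton_iff]
    exact Submodule.comap_subtype_eq_top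
  rw [h0]
  constructor
  · intro h z hs hh hz
    have hez : extC K X (i+1) (resC K X (i+1) z) = z := ext_res K hs hh
    have hker : resC K X (i+1) z ∈ LinearMap.ker (SComplex.boundary K X i) := by
      rw [LinearMap.mem_ker]
      apply extC_inj K
      rw [ext_boundary, hez, hz, extC_zero]
    obtain ⟨w, hw⟩ := LinearMap.mem_range.1 (h hker)
    refine ⟨extC K X (i+2) w, extC_suppIn K X _ w, extC_homog K X _ w, ?_⟩
    rw [← ext_boundary, hw, hez]
  · intro h z hz
    rw [LinearMap.mem_ker] at hz
    obtain ⟨w, hws, hwh, hwd⟩ := h (extC K X (i+1) z) (extC_suppIn K X _ z)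
      (extC_homog K X _ z) (by rw [← ext_boundary, hz, extC_zero])
    rw [LinearMap.mem_range]
    refine ⟨resC K X (i+2) w, extC_inj K ?_⟩
    rw [ext_boundary, ext_res K hws hwh, hwd]

lemma mv1 {Y A B C : SComplex V} (hAY : A.faces ⊆ Y.faces)
    (hcover : ∀ σ ∈ Y.faces, σ ∈ A.faces ∨ σ ∈ B.faces)
    (hint : ∀ σ, σ ∈ A.faces → σ ∈ B.faces → σ ∈ C.faces)
    (hCA : C.faces ⊆ A.faces) (i : ℕ)
    (hY : GVP K Y i) (hC : GVP K C i) : GVP K A i := by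
  intro z hs hh hz
  obtain ⟨w, hws, hwh, hwd⟩ := hY z (hs.mono hAY) hh hz
  set wA : Finset V → K := fun σ => if σ ∈ A.faces then w σ else 0 with hwA
  have hwAs : SuppIn A wA := fun σ hσ => if_neg hσ
  have hwAh : Homog (i+2) wA := fun σ hσ => by
    rw [hwA]; dsimp only; split
    exacts [hwh σ hσ, rfl]
  have hwBs : SuppIn B (w - wA) := by
    intro σ hσ
    by_cases hA : σ ∈ A.faces
    · simp [hwA, hA]
    · have hY' : σ ∉ Y.faces := fun h => ((hcover σ h).elim hA hσ)
      simp [hwA, hA, hws σ hY']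
  have hd : Dg K (w - wA) = z - Dg K wA := by rw [map_sub, hwd]
  have hcs : SuppIn C (z - Dg K wA) := by
    intro σ hσ
    by_cases hA : σ ∈ A.faces
    · by_cases hB : σ ∈ B.faces
      · exact absurd (hint σ hA hB) hσ
      · have h3 := hwBs.dg σ hB
        rw [hd] at h3; exact h3
    · have h1 := hs σ hA
      have h2 := hwAs.dg σ hA
      simp [h1, h2]
  have hch : Homog (i+1) (z - Dg K wA) := hh.sub hwAh.dg
  have hcz : Dg K (z - Dg K wA) = 0 := by
    rw [map_sub, hz, Dg_Dg, sub_zero]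
  obtain ⟨u, hus, huh, hud⟩ := hC _ hcs hch hcz
  refine ⟨wA + u, hwAs.add (hus.mono hCA), hwAh.add huh, ?_⟩
  rw [map_add, hud]
  abel

lemma mv2 {Y A B C : SComplex V} (hAY : A.faces ⊆ Y.faces) (hBY : B.faces ⊆ Y.faces)
    (hcover : ∀ σ ∈ Y.faces, σ ∈ A.faces ∨ σ ∈ B.faces)
    (hint : ∀ σ, σ ∈ A.faces → σ ∈ B.faces → σ ∈ C.faces)
    (hCA : C.faces ⊆ A.faces) (i : ℕ)
    (hzB : ∀ z : Finset V → K, SuppIn C z → Homog (i+1) z → Dg K z = 0 →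
      ∃ b, SuppIn B b ∧ Homog (i+2) b ∧ Dg K b = z)
    (hA : GVP K A i) (hY : GVP K Y (i+1)) : GVP K C i := by
  intro z hs hh hz
  obtain ⟨a, has, hah, had⟩ := hA z (hs.mono hCA) hh hz
  obtain ⟨b, hbs, hbh, hbd⟩ := hzB z hs hh hz
  have hcy : Dg K (a - b) = 0 := by rw [map_sub, had, hbd, sub_self]
  obtain ⟨w, hws, hwh, hwd⟩ := hY (a - b) ((has.mono hAY).sub (hbs.mono hBY)) (hah.sub hbh) hcy
  set wA : Finset V → K := fun σ => if σ ∈ A.faces then w σ else 0 with hwA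
  have hwAs : SuppIn A wA := fun σ hσ => if_neg hσ
  have hwAh : Homog (i+3) wA := fun σ hσ => by
    rw [hwA]; dsimp only; split
    exacts [hwh σ hσ, rfl]
  have hwBs : SuppIn B (w - wA) := by
    intro σ hσ
    by_cases hA' : σ ∈ A.faces
    · simp [hwA, hA']
    · have hY' : σ ∉ Y.faces := fun h => ((hcover σ h).elim hA' hσ)
      simp [hwA, hA', hws σ hY']
  have ha'b : a - Dg K wA = b + Dg K (w - wA) := by
    have h1 : Dg K w = a - b := hwd
    rw [map_sub, h1]
    abel
  have ha's : SuppIn A (a - Dg K wA) := has.sub hwAs.dg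
  have ha'sB : SuppIn B (a - Dg K wA) := by rw [ha'b]; exact hbs.add hwBs.dg
  have ha'C : SuppIn C (a - Dg K wA) := by
    intro σ hσ
    by_cases hA' : σ ∈ A.faces
    · by_cases hB' : σ ∈ B.faces
      · exact absurd (hint σ hA' hB') hσ
      · exact ha'sB σ hB'
    · exact ha's σ hA'
  refine ⟨a - Dg K wA, ha'C, hah.sub hwAh.dg, ?_⟩
  rw [map_sub, had, Dg_Dg, sub_zero]

lemma cext {X Y : SComplex V} (h : X.faces = Y.faces) : X = Y := by
  cases X; cases Y
  simpa using h

lemma mem_link_faces {Y : SComplex V} {A τ : Finset V} :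
    τ ∈ (Y.link A).faces ↔ τ ∈ Y.faces ∧ τ ∩ A = ∅ ∧ τ ∪ A ∈ Y.faces := by
  simp [SComplex.link, and_assoc]

lemma mem_induced_faces {Y : SComplex V} {S τ : Finset V} :
    τ ∈ (Y.induced S).faces ↔ τ ∈ Y.faces ∧ τ ⊆ S := by
  simp [SComplex.induced]

lemma mem_star_faces {Y : SComplex V} {v : V} {τ : Finset V} :
    τ ∈ (starC Y v).faces ↔ τ ∈ Y.faces ∧ insert v τ ∈ Y.faces := by
  simp [starC]

lemma inter_singleton_empty {τ : Finset V} {v : V} : τ ∩ {v} = ∅ ↔ v ∉ τ := by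
  constructor
  · intro h hv
    have h2 : v ∈ τ ∩ {v} := Finset.mem_inter.2 ⟨hv, Finset.mem_singleton_self v⟩
    rw [h] at h2
    exact absurd h2 (Finset.notMem_empty v)
  · exact Finset.inter_singleton_of_notMem

lemma inter_union_empty {τ A B : Finset V} :
    τ ∩ (A ∪ B) = ∅ ↔ τ ∩ A = ∅ ∧ τ ∩ B = ∅ := by
  simp only [Finset.eq_empty_iff_forall_notMem, Finset.mem_inter, Finset.mem_union, not_and,
    not_or]
  constructor
  · intro h
    exact ⟨fun x hx hA => (h x hx).1 hA, fun x hx hB => (h x hx).2 hB⟩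
  · rintro ⟨h1, h2⟩ x hx
    exact ⟨h1 x hx, h2 x hx⟩

lemma union_inter_empty {τ A B : Finset V} :
    (τ ∪ B) ∩ A = ∅ ↔ τ ∩ A = ∅ ∧ B ∩ A = ∅ := by
  rw [Finset.inter_comm, inter_union_empty, Finset.inter_comm τ A, Finset.inter_comm B A]

lemma gvp_of_faces_empty {A : SComplex V} (h : A.faces = ∅) (i : ℕ) : GVP K A i := by
  intro z hs _ _
  refine ⟨0, suppIn_zero A, homog_zero _, ?_⟩
  rw [map_zero]
  funext σ
  exact (hs σ (by rw [h]; exact Finset.notMem_empty σ)).symm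

lemma faces_empty_of_empty_not_mem {A : SComplex V} (h : ∅ ∉ A.faces) : A.faces = ∅ := by
  rw [Finset.eq_empty_iff_forall_notMem]
  intro τ hτ
  exact h (A.down_closed hτ (Finset.empty_subset τ))

lemma induced_univ (X : SComplex V) : X.induced Finset.univ = X := by
  apply cext
  ext τ
  rw [mem_induced_faces]
  simp

lemma link_empty (X : SComplex V) : X.link ∅ = X := by
  apply cext
  ext τ
  rw [mem_link_faces]
  simp

lemma link_link (Y : SComplex V) (A B : Finset V) (hd : A ∩ B = ∅) :
    (Y.link A).link B = Y.link (A ∪ B) := by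
  apply cext
  ext τ
  rw [mem_link_faces, mem_link_faces, mem_link_faces, mem_link_faces]
  have hBA : B ∩ A = ∅ := by rw [Finset.inter_comm]; exact hd
  have hre : τ ∪ B ∪ A = τ ∪ (A ∪ B) := by
    rw [Finset.union_assoc, Finset.union_comm B A]
  constructor
  · rintro ⟨⟨h1, h2, _⟩, h4, _, _, h7⟩
    exact ⟨h1, inter_union_empty.2 ⟨h2, h4⟩, hre ▸ h7⟩
  · rintro ⟨h1, h2, h3⟩
    obtain ⟨hA, hB⟩ := inter_union_empty.1 h2
    refine ⟨⟨h1, hA, Y.down_closed h3 (Finset.union_subset_union (Finset.Subset.refl τ)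
      Finset.subset_union_left)⟩, hB,
      Y.down_closed h3 (Finset.union_subset_union (Finset.Subset.refl τ)
        Finset.subset_union_right),
      union_inter_empty.2 ⟨hA, hBA⟩, hre ▸ h3⟩

/-- Link of a deleted complex: `lk(Y∖v, σ) = lk(Y,σ)∖v` for `v ∉ σ`. -/
lemma link_induced_erase (Y : SComplex V) (σ : Finset V) (v : V) (hv : v ∉ σ) :
    (Y.induced (Finset.univ.erase v)).link σ
      = (Y.link σ).induced (Finset.univ.erase v) := by
  apply cext
  ext τ
  simp only [mem_link_faces, mem_induced_faces]
  simp only [Finset.subset_erase, Finset.subset_univ, true_and, Finset.mem_union, not_or]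
  constructor
  · rintro ⟨⟨h1, h2⟩, h3, h4, _⟩
    exact ⟨⟨h1, h3, h4⟩, h2⟩
  · rintro ⟨⟨h1, h3, h4⟩, h2⟩
    exact ⟨⟨h1, h2⟩, h3, ⟨h4, h2, hv⟩⟩

/-- `X[insert v T]∖v = X[T]` for `v ∉ T`. -/
lemma induced_insert_erase (X : SComplex V) (T : Finset V) (v : V) (hv : v ∉ T) :
    (X.induced (insert v T)).induced (Finset.univ.erase v) = X.induced T := by
  apply cext
  ext τ
  simp only [mem_induced_faces]
  simp only [Finset.subset_erase, Finset.subset_univ, true_and]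
  constructor
  · rintro ⟨⟨h1, h2⟩, h3⟩
    exact ⟨h1, (Finset.subset_insert_iff_of_notMem h3).1 h2⟩
  · rintro ⟨h1, h2⟩
    exact ⟨⟨h1, h2.trans (Finset.subset_insert v T)⟩, fun h => hv (h2 h)⟩

/-- `lk(X,v)[S] = lk(X,v)[S∖v]`. -/
lemma link_induced_erase_self (X : SComplex V) (v : V) (S : Finset V) :
    (X.link {v}).induced S = (X.link {v}).induced (S.erase v) := by
  apply cext
  ext τ
  simp only [mem_induced_faces, mem_link_faces]
  simp only [Finset.subset_erase, inter_singleton_empty]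
  tauto

/-- `lk(X[insert v S'], v) = lk(X,v)[S']` for `v ∉ S'`. -/
lemma link_of_induced_insert (X : SComplex V) (v : V) (S' : Finset V) (hv : v ∉ S') :
    (X.induced (insert v S')).link {v} = (X.link {v}).induced S' := by
  apply cext
  ext τ
  simp only [mem_link_faces, mem_induced_faces]
  simp only [inter_singleton_empty, union_singleton']
  constructor
  · rintro ⟨⟨h1, h2⟩, h3, h4, _⟩
    exact ⟨⟨h1, h3, h4⟩, (Finset.subset_insert_iff_of_notMem h3).1 h2⟩
  · rintro ⟨⟨h1, h3, h4⟩, h2⟩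
    exact ⟨⟨h1, h2.trans (Finset.subset_insert v S')⟩, h3, h4,
      Finset.insert_subset_insert v h2⟩

/-- The `d`-Leray property in the global model. -/
def LP (d : ℕ) (X : SComplex V) : Prop :=
  ∀ S : Finset V, ∀ i : ℕ, d ≤ i → GVP K (X.induced S) i

/-- Vanishing of all links in the global model. -/
def QP (d : ℕ) (Y : SComplex V) : Prop :=
  ∀ σ ∈ Y.faces, ∀ i : ℕ, d ≤ i → GVP K (Y.link σ) i

variable {K}

/-- Deleting a vertex preserves the link-vanishing property. -/
lemma qp_del {d : ℕ} {Y : SComplex V} (hQ : QP K d Y) (v : V) :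
    QP K d (Y.induced (Finset.univ.erase v)) := by
  intro σ hσ i hi
  rw [mem_induced_faces] at hσ
  obtain ⟨hσY, hσsub⟩ := hσ
  have hvσ : v ∉ σ := (Finset.subset_erase.1 hσsub).2
  rw [link_induced_erase Y σ v hvσ]
  set Z := Y.link σ with hZ
  refine mv1 K (Y := Z) (B := starC Z v) (C := Z.link {v}) ?_ ?_ ?_ ?_ i (hQ σ hσY i hi) ?_
  · intro τ hτ
    exact (mem_induced_faces.1 hτ).1
  · intro τ hτ
    by_cases hvτ : v ∈ τ
    · exact Or.inr (mem_star_faces.2 ⟨hτ, by rwa [Finset.insert_eq_self.2 hvτ]⟩)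
    · exact Or.inl (mem_induced_faces.2 ⟨hτ, Finset.subset_erase.2
        ⟨Finset.subset_univ τ, hvτ⟩⟩)
  · intro τ h1 h2
    rw [mem_induced_faces] at h1
    rw [mem_star_faces] at h2
    exact mem_link_faces.2 ⟨h1.1, inter_singleton_empty.2 (Finset.subset_erase.1 h1.2).2,
      by rw [union_singleton']; exact h2.2⟩
  · intro τ hτ
    rw [mem_link_faces] at hτ
    exact mem_induced_faces.2 ⟨hτ.1, Finset.subset_erase.2
      ⟨Finset.subset_univ τ, inter_singleton_empty.1 hτ.2.1⟩⟩
  · rw [link_link Y σ {v} (Finset.inter_singleton_of_notMem hvσ)]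
    by_cases h : σ ∪ {v} ∈ Y.faces
    · exact hQ (σ ∪ {v}) h i hi
    · refine gvp_of_faces_empty K ?_ i
      rw [Finset.eq_empty_iff_forall_notMem]
      intro τ hτ
      rw [mem_link_faces] at hτ
      exact h (Y.down_closed hτ.2.2 Finset.subset_union_right)

lemma qp_induced {d : ℕ} {X : SComplex V} (hQ : QP K d X) (T : Finset V) :
    QP K d (X.induced T) := by
  generalize hn : Tᶜ.card = n
  induction n generalizing T with
  | zero =>
    have hT : T = Finset.univ := by
      rw [Finset.card_eq_zero] at hn
      rw [Finset.eq_univ_iff_forall]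
      intro x
      by_contra hx
      rw [← Finset.mem_compl, hn] at hx
      exact Finset.notMem_empty x hx
    rw [hT, induced_univ]
    exact hQ
  | succ n ih =>
    have hne : Tᶜ.Nonempty := Finset.card_pos.1 (by omega)
    obtain ⟨v, hv⟩ := hne
    have hvT : v ∉ T := Finset.mem_compl.1 hv
    have h1 : (insert v T)ᶜ.card = n := by
      rw [Finset.compl_insert, Finset.card_erase_of_mem hv, hn]
      omega
    have hQ' := ih (insert v T) h1
    have h2 := qp_del hQ' v
    rwa [induced_insert_erase X T v hvT] at h2

lemma gvp_of_qp {d : ℕ} {Z : SComplex V} (hQ : QP K d Z) {i : ℕ} (hi : d ≤ i) :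
    GVP K Z i := by
  by_cases h : ∅ ∈ Z.faces
  · have := hQ ∅ h i hi
    rwa [link_empty] at this
  · exact gvp_of_faces_empty K (faces_empty_of_empty_not_mem h) i

lemma lp_of_qp {d : ℕ} {X : SComplex V} (hQ : QP K d X) : LP K d X := by
  intro S i hi
  exact gvp_of_qp (qp_induced hQ S) hi

lemma lp_link {d : ℕ} {X : SComplex V} (hL : LP K d X) (v : V) : LP K d (X.link {v}) := by
  intro S i hi
  rw [link_induced_erase_self X v S]
  set S' := S.erase v with hS'
  have hvS' : v ∉ S' := Finset.notMem_erase v S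
  rw [← link_of_induced_insert X v S' hvS']
  set Y := X.induced (insert v S') with hY
  refine mv2 K (A := X.induced S') (B := starC Y v) ?_ ?_ ?_ ?_ ?_ i ?_ (hL S' i hi)
    (hL (insert v S') (i+1) (by omega))
  · intro τ hτ
    rw [mem_induced_faces] at hτ ⊢
    exact ⟨hτ.1, hτ.2.trans (Finset.subset_insert v S')⟩
  · intro τ hτ
    exact (mem_star_faces.1 hτ).1
  · intro τ hτ
    rw [mem_induced_faces] at hτ
    by_cases hvτ : v ∈ τ
    · refine Or.inr (mem_star_faces.2 ⟨mem_induced_faces.2 hτ, ?_⟩)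
      rw [Finset.insert_eq_self.2 hvτ]
      exact mem_induced_faces.2 hτ
    · refine Or.inl (mem_induced_faces.2 ⟨hτ.1,
        (Finset.subset_insert_iff_of_notMem hvτ).1 hτ.2⟩)
  · intro τ h1 h2
    rw [mem_induced_faces] at h1
    rw [mem_star_faces] at h2
    refine mem_link_faces.2 ⟨h2.1, inter_singleton_empty.2 (fun h => hvS' (h1.2 h)), ?_⟩
    rw [union_singleton']
    exact h2.2
  · intro τ hτ
    rw [mem_link_faces] at hτ
    have h1 := mem_induced_faces.1 hτ.1
    refine mem_induced_faces.2 ⟨h1.1, ?_⟩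
    have hvτ : v ∉ τ := inter_singleton_empty.1 hτ.2.1
    exact (Finset.subset_insert_iff_of_notMem hvτ).1 h1.2
  · intro z hzs hzh hzd
    exact ⟨ConeF K v z, coneF_suppIn hzs, coneF_homog hzh, coneF_dg hzd⟩

lemma qp_of_lp_aux {d : ℕ} : ∀ (n : ℕ) (X : SComplex V), LP K d X →
    ∀ σ ∈ X.faces, σ.card = n → ∀ i : ℕ, d ≤ i → GVP K (X.link σ) i := by
  intro n
  induction n with
  | zero =>
    intro X hL σ hσ hcard i hi
    rw [Finset.card_eq_zero] at hcard
    subst hcard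
    rw [link_empty]
    have := hL Finset.univ i hi
    rwa [induced_univ] at this
  | succ n ih =>
    intro X hL σ hσ hcard i hi
    have hne : σ.Nonempty := Finset.card_pos.1 (by omega)
    obtain ⟨v, hv⟩ := hne
    have hσeq : {v} ∪ σ.erase v = σ := by
      rw [← Finset.insert_eq, Finset.insert_erase hv]
    have hdisj : ({v} : Finset V) ∩ σ.erase v = ∅ := by
      rw [Finset.inter_comm]
      exact Finset.inter_singleton_of_notMem (Finset.notMem_erase v σ)
    have hXσ : X.link σ = (X.link {v}).link (σ.erase v) := by
      rw [link_link X {v} (σ.erase v) hdisj, hσeq]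
    rw [hXσ]
    refine ih (X.link {v}) (lp_link hL v) (σ.erase v) ?_
      (by rw [Finset.card_erase_of_mem hv, hcard]; omega) i hi
    refine mem_link_faces.2 ⟨X.down_closed hσ (Finset.erase_subset v σ),
      inter_singleton_empty.2 (Finset.notMem_erase v σ), ?_⟩
    rw [union_singleton', Finset.insert_erase hv]
    exact hσ

end LerayAux

open SComplex in
/-- **Proposition.** For a finite simplicial complex `X` on the vertex set `V`
and `d ≥ 0`, the following are equivalent: (i) `X` is `d`-Leray over `K`, i.e.
`H̃_i(X[S]; K) = 0` for all `S ⊆ V` and `i ≥ d`; (ii) `H̃_i(lk(X,σ); K) = 0`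
for every face `σ ∈ X` and every `i ≥ d`.
(Recall that `redHomDim K Z (i+1) = dim_K H̃_i(Z; K)`, cardinality-indexed.) -/
theorem leray_iff_links {V : Type} [DecidableEq V] [Fintype V]
    (K : Type) [Field K] (X : SComplex V) (d : ℕ) :
    (∀ S : Finset V, ∀ i : ℕ, d ≤ i → redHomDim K (X.induced S) (i + 1) = 0) ↔
    (∀ σ ∈ X.faces, ∀ i : ℕ, d ≤ i → redHomDim K (X.link σ) (i + 1) = 0) := by
  constructor
  · intro h σ hσ i hi
    rw [LerayAux.redHom_iff]
    have hL : LerayAux.LP K d X := fun S j hj => (LerayAux.redHom_iff K _ j).1 (h S j hj)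
    exact LerayAux.qp_of_lp_aux σ.card X hL σ hσ rfl i hi
  · intro h S i hi
    rw [LerayAux.redHom_iff]
    have hQ : LerayAux.QP K d X := fun σ hσ j hj => (LerayAux.redHom_iff K _ j).1 (h σ hσ j hj)
    exact LerayAux.lp_of_qp hQ S i hi
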